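/- Checking whether a pair (R⁺, R⁻) is an inconsistency reason reduces to a single consistency check: (R⁺, R⁻) (with R⁺, R⁻ ⊆ D disjoint) is an IR of a normal program P wrt. D if and only if the program P' = P ∪ {x ← | x ∈ R⁺} ∪ {x ← not nx; nx ← not x | x ∈ D \ (R⁺ ∪ R⁻)} is inconsistent, where each nx is a fresh atom. -/

import Mathlib

structure Rule (Atom : Type) where
  head : Atom
  pbody : Set Atom
  nbody : Set Atom

def satRule {Atom : Type} (I : Set Atom) (r : Rule Atom) : Prop :=
  r.pbody ⊆ I ∧ r.nbody ∩ I = ∅ → r.head ∈ I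

def isModel {Atom : Type} (I : Set Atom) (P : Set (Rule Atom)) : Prop :=
  ∀ r ∈ P, satRule I r

def reduct {Atom : Type} (P : Set (Rule Atom)) (I : Set Atom) : Set (Rule Atom) :=
  {r' | ∃ r ∈ P, r.nbody ∩ I = ∅ ∧ r' = Rule.mk r.head r.pbody ∅}

def isAnswerSet {Atom : Type} (P : Set (Rule Atom)) (I : Set Atom) : Prop :=
  isModel I (reduct P I) ∧ ∀ J, isModel J (reduct P I) → I ⊆ J

def facts {Atom : Type} (F : Set Atom) : Set (Rule Atom) :=
  {r | ∃ a ∈ F, r = Rule.mk a ∅ ∅}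

section Aux

variable {Atom : Type}

/-- Workhorse: a model of the reduct contains heads of rules with satisfied bodies. -/
lemma sat_reduct {Q : Set (Rule Atom)} {I J : Set Atom}
    (h : isModel J (reduct Q I)) {r : Rule Atom} (hr : r ∈ Q)
    (hn : r.nbody ∩ I = ∅) (hp : r.pbody ⊆ J) : r.head ∈ J :=
  h (Rule.mk r.head r.pbody ∅) ⟨r, hr, hn, rfl⟩ ⟨hp, Set.empty_inter J⟩

/-- Every atom in an answer set is the head of some rule whose negative body
is disjoint from the answer set. -/
lemma exists_head {Q : Set (Rule Atom)} {I : Set Atom} (h : isAnswerSet Q I)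
    {a : Atom} (ha : a ∈ I) : ∃ r ∈ Q, r.head = a ∧ r.nbody ∩ I = ∅ := by
  by_contra hc
  push_neg at hc
  have hmod : isModel (I \ {a}) (reduct Q I) := by
    rintro r' ⟨r, hr, hn, rfl⟩
    rintro ⟨hp, -⟩
    have hh : r.head ∈ I := sat_reduct h.1 hr hn (hp.trans Set.diff_subset)
    exact ⟨hh, fun he => Set.nonempty_iff_ne_empty.mp (hc r hr (by simpa using he)) hn⟩
  exact ((h.2 _ hmod) ha).2 rfl

lemma forward_dir {Atom : Type} (P : Set (Rule Atom)) (D Rp Rm : Set Atom)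
    (nn : Atom → Atom)
    (hHD : ∀ r ∈ P, r.head ∉ D)
    (hRp : Rp ⊆ D) (hdisj : Rp ∩ Rm = ∅)
    (hinj : Function.Injective nn)
    (hfresh : ∀ x, nn x ∉ D ∧ ∀ r ∈ P, r.head ≠ nn x ∧ nn x ∉ r.pbody ∧ nn x ∉ r.nbody)
    (I : Set Atom)
    (hI : isAnswerSet
        (P ∪ facts Rp
           ∪ {r | ∃ x ∈ D \ (Rp ∪ Rm), r = Rule.mk x ∅ {nn x}}
           ∪ {r | ∃ x ∈ D \ (Rp ∪ Rm), r = Rule.mk (nn x) ∅ {x}}) I) :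
    ∃ F, F ⊆ D ∧ Rp ⊆ F ∧ Rm ∩ F = ∅ ∧ ∃ J, isAnswerSet (P ∪ facts F) J := by
  classical
  set D' : Set Atom := D \ (Rp ∪ Rm) with hD'def
  set P' : Set (Rule Atom) :=
      P ∪ facts Rp
        ∪ {r | ∃ x ∈ D', r = Rule.mk x ∅ {nn x}}
        ∪ {r | ∃ x ∈ D', r = Rule.mk (nn x) ∅ {x}} with hP'def
  set S : Set Atom := {a | ∃ x, x ∈ D' ∧ x ∉ I ∧ a = nn x} with hSdef
  set F : Set Atom := Rp ∪ (I ∩ D') with hFdef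
  have mem1 : ∀ r ∈ P, r ∈ P' := fun r h => Or.inl (Or.inl (Or.inl h))
  have mem2 : ∀ a ∈ Rp, Rule.mk a ∅ ∅ ∈ P' :=
    fun a h => Or.inl (Or.inl (Or.inr ⟨a, h, rfl⟩))
  have mem3 : ∀ x ∈ D', Rule.mk x ∅ {nn x} ∈ P' :=
    fun x h => Or.inl (Or.inr ⟨x, h, rfl⟩)
  have mem4 : ∀ x ∈ D', Rule.mk (nn x) ∅ {x} ∈ P' :=
    fun x h => Or.inr ⟨x, h, rfl⟩
  -- if nn x ∈ I then x ∈ D' and x ∉ I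
  have claimA : ∀ x, nn x ∈ I → x ∈ D' ∧ x ∉ I := by
    intro x hx
    obtain ⟨r, hr, hhead, hn⟩ := exists_head hI hx
    rcases hr with ((hr | hr) | hr) | hr
    · exact absurd hhead ((hfresh x).2 r hr).1
    · obtain ⟨a, ha, rfl⟩ := hr
      exact absurd (hhead ▸ hRp ha) (hfresh x).1
    · obtain ⟨y, hy, rfl⟩ := hr
      exact absurd (hhead ▸ hy.1) (hfresh x).1
    · obtain ⟨y, hy, rfl⟩ := hr
      have hyx : y = x := hinj hhead
      subst hyx
      refine ⟨hy, fun hxI => ?_⟩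
      exact Set.singleton_inter_eq_empty.mp hn hxI
  -- if x ∈ D' and nn x ∉ I then x ∈ I
  have claimB : ∀ x ∈ D', nn x ∉ I → x ∈ I := by
    intro x hx h
    exact sat_reduct hI.1 (mem3 x hx)
      (by simpa using Set.singleton_inter_eq_empty.mpr h) (Set.empty_subset _)
  have hSnI : S ⊆ I := by
    rintro a ⟨x, hx, hxI, rfl⟩
    by_contra h
    exact hxI (claimB x hx h)
  have hDS : ∀ a ∈ D, a ∉ S := by
    rintro a ha ⟨x, _, _, rfl⟩
    exact (hfresh x).1 ha
  have hRpI : Rp ⊆ I := by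
    intro a ha
    exact sat_reduct hI.1 (mem2 a ha) (by simp) (Set.empty_subset _)
  have hFD : F ⊆ D := by
    rintro a (ha | ha)
    · exact hRp ha
    · exact ha.2.1
  have hRmF : Rm ∩ F = ∅ := by
    rw [Set.eq_empty_iff_forall_notMem]
    rintro a ⟨haM, (ha | ha)⟩
    · exact Set.eq_empty_iff_forall_notMem.mp hdisj a ⟨ha, haM⟩
    · exact ha.2.2 (Or.inr haM)
  have hFI : F ⊆ I \ S := by
    rintro a (ha | ha)
    · exact ⟨hRpI ha, hDS a (hRp ha)⟩
    · exact ⟨ha.1, hDS a ha.2.1⟩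
  refine ⟨F, hFD, Set.subset_union_left, hRmF, I \ S, ?_, ?_⟩
  · -- model
    rintro r' ⟨r, hr | hr, hn, rfl⟩
    · rintro ⟨hp, -⟩
      have hnI : r.nbody ∩ I = ∅ := by
        rw [Set.eq_empty_iff_forall_notMem]
        rintro b ⟨hb, hbI⟩
        by_cases hbS : b ∈ S
        · obtain ⟨x, _, _, rfl⟩ := hbS
          exact ((hfresh x).2 r hr).2.2 hb
        · exact Set.eq_empty_iff_forall_notMem.mp hn b ⟨hb, hbI, hbS⟩
      have hh : r.head ∈ I :=
        sat_reduct hI.1 (mem1 r hr) hnI (hp.trans Set.diff_subset)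
      refine ⟨hh, ?_⟩
      rintro ⟨x, _, _, hx⟩
      exact ((hfresh x).2 r hr).1 hx
    · -- from facts F
      obtain ⟨a, ha, rfl⟩ := hr
      rintro ⟨-, -⟩
      exact hFI ha
  · -- minimality
    intro J hJ
    have hJ' : isModel (J ∪ S) (reduct P' I) := by
      rintro r' ⟨r, hr, hn, rfl⟩
      rcases hr with ((hr | hr) | hr) | hr
      · rintro ⟨hp, -⟩
        have hpJ : r.pbody ⊆ J := by
          intro b hb
          rcases hp hb with hbJ | hbS
          · exact hbJ
          · obtain ⟨x, _, _, rfl⟩ := hbS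
            exact absurd hb ((hfresh x).2 r hr).2.1
        have hn0 : r.nbody ∩ (I \ S) = ∅ := by
          rw [Set.eq_empty_iff_forall_notMem]
          rintro b ⟨hb, hbI, -⟩
          exact Set.eq_empty_iff_forall_notMem.mp hn b ⟨hb, hbI⟩
        exact Or.inl (sat_reduct (r := r) hJ (Or.inl hr) hn0 hpJ)
      · obtain ⟨a, ha, rfl⟩ := hr
        rintro ⟨-, -⟩
        exact Or.inl (sat_reduct hJ (Or.inr ⟨a, Or.inl ha, rfl⟩) (by simp)
          (Set.empty_subset _))
      · obtain ⟨x, hx, rfl⟩ := hr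
        rintro ⟨-, -⟩
        have hnx : nn x ∉ I := Set.singleton_inter_eq_empty.mp hn
        have hxF : x ∈ F := Or.inr ⟨claimB x hx hnx, hx⟩
        exact Or.inl (sat_reduct hJ (Or.inr ⟨x, hxF, rfl⟩) (by simp)
          (Set.empty_subset _))
      · obtain ⟨x, hx, rfl⟩ := hr
        rintro ⟨-, -⟩
        have hxI : x ∉ I := Set.singleton_inter_eq_empty.mp hn
        exact Or.inr ⟨x, hx, hxI, rfl⟩
    have hsub : I ⊆ J ∪ S := hI.2 (J ∪ S) hJ'
    rintro a ⟨haI, haS⟩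
    rcases hsub haI with h | h
    · exact h
    · exact absurd h haS

lemma backward_dir {Atom : Type} (P : Set (Rule Atom)) (D Rp Rm : Set Atom)
    (nn : Atom → Atom)
    (hHD : ∀ r ∈ P, r.head ∉ D)
    (hinj : Function.Injective nn)
    (hfresh : ∀ x, nn x ∉ D ∧ ∀ r ∈ P, r.head ≠ nn x ∧ nn x ∉ r.pbody ∧ nn x ∉ r.nbody)
    (F : Set Atom) (hFD : F ⊆ D) (hRpF : Rp ⊆ F) (hRmF : Rm ∩ F = ∅)
    (I : Set Atom) (hI : isAnswerSet (P ∪ facts F) I) :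
    ∃ J, isAnswerSet
        (P ∪ facts Rp
           ∪ {r | ∃ x ∈ D \ (Rp ∪ Rm), r = Rule.mk x ∅ {nn x}}
           ∪ {r | ∃ x ∈ D \ (Rp ∪ Rm), r = Rule.mk (nn x) ∅ {x}}) J := by
  classical
  set D' : Set Atom := D \ (Rp ∪ Rm) with hD'def
  set T : Set Atom := {a | ∃ x, x ∈ D' ∧ x ∉ F ∧ a = nn x} with hTdef
  set I' : Set Atom := I ∪ T with hI'def
  have hFI : F ⊆ I := by
    intro a ha
    exact sat_reduct hI.1 (Or.inr ⟨a, ha, rfl⟩) (by simp) (Set.empty_subset _)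
  have hheads : ∀ a ∈ I, a ∈ F ∨ ∃ r ∈ P, r.head = a := by
    intro a ha
    obtain ⟨r, hr | hr, hhead, -⟩ := exists_head hI ha
    · exact Or.inr ⟨r, hr, hhead⟩
    · obtain ⟨b, hb, rfl⟩ := hr
      exact Or.inl (hhead ▸ hb)
  have hnnI : ∀ x, nn x ∉ I := by
    intro x hx
    rcases hheads _ hx with h | ⟨r, hr, hhead⟩
    · exact (hfresh x).1 (hFD h)
    · exact ((hfresh x).2 r hr).1 hhead
  have hDF : ∀ x ∈ D, (x ∈ I ↔ x ∈ F) := by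
    intro x hxD
    constructor
    · intro hxI
      rcases hheads _ hxI with h | ⟨r, hr, hhead⟩
      · exact h
      · exact absurd (hhead ▸ hxD) (hHD r hr)
    · exact fun h => hFI h
  have hTD : ∀ a ∈ T, a ∉ D := by
    rintro a ⟨x, -, -, rfl⟩ h
    exact (hfresh x).1 h
  have hxI' : ∀ x ∈ D, (x ∈ I' ↔ x ∈ F) := by
    intro x hxD
    constructor
    · rintro (h | h)
      · exact (hDF x hxD).mp h
      · exact absurd hxD (hTD x h)
    · exact fun h => Or.inl (hFI h)
  have hnnI' : ∀ x, (nn x ∈ I' ↔ x ∈ D' ∧ x ∉ F) := by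
    intro x
    constructor
    · rintro (h | ⟨y, hy1, hy2, hy⟩)
      · exact absurd h (hnnI x)
      · obtain rfl : y = x := hinj hy.symm
        exact ⟨hy1, hy2⟩
    · rintro ⟨h1, h2⟩
      exact Or.inr ⟨x, h1, h2, rfl⟩
  refine ⟨I', ?_, ?_⟩
  · -- model
    rintro r' ⟨r, ((hr | hr) | hr) | hr, hn, rfl⟩
    · rintro ⟨hp, -⟩
      have hpI : r.pbody ⊆ I := by
        intro b hb
        rcases hp hb with h | h
        · exact h
        · obtain ⟨x, -, -, rfl⟩ := h
          exact absurd hb ((hfresh x).2 r hr).2.1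
      have hnI : r.nbody ∩ I = ∅ := by
        rw [Set.eq_empty_iff_forall_notMem]
        rintro b ⟨hb, hbI⟩
        exact Set.eq_empty_iff_forall_notMem.mp hn b ⟨hb, Or.inl hbI⟩
      exact Or.inl (sat_reduct (r := r) hI.1 (Or.inl hr) hnI hpI)
    · obtain ⟨a, ha, rfl⟩ := hr
      rintro ⟨-, -⟩
      exact Or.inl (hFI (hRpF ha))
    · obtain ⟨x, hx, rfl⟩ := hr
      rintro ⟨-, -⟩
      have hnx : nn x ∉ I' := Set.singleton_inter_eq_empty.mp hn
      have hxF : x ∈ F := by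
        by_contra h
        exact hnx ((hnnI' x).mpr ⟨hx, h⟩)
      exact Or.inl (hFI hxF)
    · obtain ⟨x, hx, rfl⟩ := hr
      rintro ⟨-, -⟩
      have hxI : x ∉ I' := Set.singleton_inter_eq_empty.mp hn
      have hxF : x ∉ F := fun h => hxI ((hxI' x hx.1).mpr h)
      exact Or.inr ⟨x, hx, hxF, rfl⟩
  · -- minimality
    intro J hJ
    have hJQ : isModel J (reduct (P ∪ facts F) I) := by
      rintro r' ⟨r, hr | hr, hn, rfl⟩
      · have hnI' : r.nbody ∩ I' = ∅ := by
          rw [Set.eq_empty_iff_forall_notMem]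
          rintro b ⟨hb, hbI | hbT⟩
          · exact Set.eq_empty_iff_forall_notMem.mp hn b ⟨hb, hbI⟩
          · obtain ⟨x, -, -, rfl⟩ := hbT
            exact ((hfresh x).2 r hr).2.2 hb
        exact hJ _ ⟨r, Or.inl (Or.inl (Or.inl hr)), hnI', rfl⟩
      · obtain ⟨a, ha, rfl⟩ := hr
        rintro ⟨-, -⟩
        by_cases haRp : a ∈ Rp
        · exact sat_reduct (r := Rule.mk a ∅ ∅) hJ (Or.inl (Or.inl (Or.inr ⟨a, haRp, rfl⟩)))
            (by simp) (Set.empty_subset _)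
        · have haD' : a ∈ D' := by
            refine ⟨hFD ha, ?_⟩
            rintro (h | h)
            · exact haRp h
            · exact Set.eq_empty_iff_forall_notMem.mp hRmF a ⟨h, ha⟩
          have hnx : nn a ∉ I' := fun h => ((hnnI' a).mp h).2 ha
          exact sat_reduct (r := Rule.mk a ∅ {nn a}) hJ (Or.inl (Or.inr ⟨a, haD', rfl⟩))
            (by simpa using Set.singleton_inter_eq_empty.mpr hnx)
            (Set.empty_subset _)
    have hIJ : I ⊆ J := hI.2 J hJQ
    rintro a (ha | ⟨x, hx1, hx2, rfl⟩)
    · exact hIJ ha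
    · have hxI : x ∉ I' := fun h => hx2 ((hxI' x hx1.1).mp h)
      exact sat_reduct (r := Rule.mk (nn x) ∅ {x}) hJ (Or.inr ⟨x, hx1, rfl⟩)
        (by simpa using Set.singleton_inter_eq_empty.mpr hxI)
        (Set.empty_subset _)


end Aux

theorem stmt13 {Atom : Type} (P : Set (Rule Atom)) (D Rp Rm : Set Atom)
    (nn : Atom → Atom)
    (hHD : ∀ r ∈ P, r.head ∉ D)
    (hRp : Rp ⊆ D) (hRm : Rm ⊆ D) (hdisj : Rp ∩ Rm = ∅)
    (hinj : Function.Injective nn)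
    (hfresh : ∀ x, nn x ∉ D ∧ ∀ r ∈ P, r.head ≠ nn x ∧ nn x ∉ r.pbody ∧ nn x ∉ r.nbody) :
    (∀ F, F ⊆ D → Rp ⊆ F → Rm ∩ F = ∅ → ¬ ∃ I, isAnswerSet (P ∪ facts F) I) ↔
      ¬ ∃ I, isAnswerSet
        (P ∪ facts Rp
           ∪ {r | ∃ x ∈ D \ (Rp ∪ Rm), r = Rule.mk x ∅ {nn x}}
           ∪ {r | ∃ x ∈ D \ (Rp ∪ Rm), r = Rule.mk (nn x) ∅ {x}}) I := by
  constructor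
  · rintro h ⟨I, hI⟩
    obtain ⟨F, h1, h2, h3, J, hAS⟩ :=
      forward_dir P D Rp Rm nn hHD hRp hdisj hinj hfresh I hI
    exact h F h1 h2 h3 ⟨J, hAS⟩
  · rintro h F hFD hRpF hRmF ⟨I, hI⟩
    exact h (backward_dir P D Rp Rm nn hHD hinj hfresh F hFD hRpF hRmF I hI)
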